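/- Let f(λ) = |b(ι) − λ a(ι)| with a(ι) > 0 and h(λ) = |b(g) − λ a(g)| with |a(g)| < a(ι). Then the set {λ ∈ ℝ : h(λ) ≥ f(λ)} is a closed, bounded, nonempty interval containing λ_0 = b(ι)/a(ι). -/

import Mathlib

theorem stmt_16 (A B ag bg : ℝ) (hA : 0 < A) (hlt : |ag| < A) :
    ∃ lo hi : ℝ,
      {lam : ℝ | |B - lam * A| ≤ |bg - lam * ag|} = Set.Icc lo hi ∧
      B / A ∈ Set.Icc lo hi := by
  obtain ⟨ha1, ha2⟩ := abs_lt.mp hlt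
  have hc : (0:ℝ) < A ^ 2 - ag ^ 2 := by nlinarith
  have hs0 : (0:ℝ) ≤ |A * bg - ag * B| := abs_nonneg _
  have hssq : |A * bg - ag * B| ^ 2 = (A * bg - ag * B) ^ 2 := sq_abs _
  have hset : {lam : ℝ | |B - lam * A| ≤ |bg - lam * ag|}
      = Set.Icc (((A * B - ag * bg) - |A * bg - ag * B|) / (A ^ 2 - ag ^ 2))
          (((A * B - ag * bg) + |A * bg - ag * B|) / (A ^ 2 - ag ^ 2)) := by
    ext lam
    simp only [Set.mem_setOf_eq, Set.mem_Icc]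
    rw [div_le_iff₀ hc, le_div_iff₀ hc]
    constructor
    · intro h
      have h2 : (B - lam * A) ^ 2 ≤ (bg - lam * ag) ^ 2 := by
        have := mul_self_le_mul_self (abs_nonneg _) h
        rw [abs_mul_abs_self, abs_mul_abs_self] at this
        nlinarith [this]
      have hkey : ((A ^ 2 - ag ^ 2) * lam - (A * B - ag * bg)) ^ 2
          ≤ |A * bg - ag * B| ^ 2 := by
        rw [hssq]; nlinarith [mul_le_mul_of_nonneg_left h2 hc.le]
      constructor
      · nlinarith [sq_nonneg ((A ^ 2 - ag ^ 2) * lam - (A * B - ag * bg) + |A * bg - ag * B|)]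
      · nlinarith [sq_nonneg ((A ^ 2 - ag ^ 2) * lam - (A * B - ag * bg) - |A * bg - ag * B|)]
    · rintro ⟨h1, h2⟩
      have h3 : (B - lam * A) ^ 2 ≤ (bg - lam * ag) ^ 2 := by
        nlinarith [mul_nonneg (sub_nonneg.mpr h1) (sub_nonneg.mpr h2), hssq, hc]
      have h4 := Real.sqrt_le_sqrt h3
      rwa [Real.sqrt_sq_eq_abs, Real.sqrt_sq_eq_abs] at h4
  refine ⟨_, _, hset, ?_⟩
  rw [← hset]
  have hB : B - B / A * A = 0 := by field_simp; ring
  simp only [Set.mem_setOf_eq, hB, abs_zero]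
  exact abs_nonneg _
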